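/- Let w ∈ Sₙ and (a,b) ∈ Ref(w). Then e_b − e_a cannot be written as Σ_{i=1}^{k} c_i (e_{b_i} − e_{a_i}) with k ≥ 1, real coefficients c_i > 0, and pairwise distinct pairs (a_i,b_i) ∈ Ref(w) all different from (a,b). In other words, for each (a,b) ∈ Ref(w) the vector e_b − e_a spans an extreme ray (edge) of the convex cone D_w in ℝⁿ generated by {e_y − e_x : (x,y) ∈ Ref(w)}. -/

import Mathlib

namespace SchubertToric

open Equiv

/-- The number of inversions (= the length `ℓ`) of a permutation. -/
def invCount {n : ℕ} (w : Equiv.Perm (Fin n)) : ℕ :=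
  ((Finset.univ : Finset (Fin n × Fin n)).filter fun p => p.1 < p.2 ∧ w p.2 < w p.1).card

/-- `initSeg w d` is the set `{w(1), …, w(d)}` (0-indexed: images of the first `d` indices). -/
def initSeg {n : ℕ} (w : Equiv.Perm (Fin n)) (d : ℕ) : Finset (Fin n) :=
  (Finset.univ.filter fun i : Fin n => (i : ℕ) < d).image w

/-- `domLE S T`: the increasing rearrangement of `S` is componentwise ≤ that of `T`. -/
def domLE {n : ℕ} (S T : Finset (Fin n)) : Prop :=
  List.Forall₂ (· ≤ ·) (S.sort (· ≤ ·)) (T.sort (· ≤ ·))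

/-- Bruhat order on `
Sₙ`, via the tableau criterion. -/
def bruhatLE {n : ℕ} (v w : Equiv.Perm (Fin n)) : Prop :=
  ∀ d : ℕ, domLE (initSeg v d) (initSeg w d)

/-- `GreedyRel w v vp` says that `vp = v'`, the result of the greedy operation associated
to `w`: there is a sequence of indices `idx 0, idx 1, …`, each chosen as the *least* index
not previously chosen such that the increasing rearrangement of the previously chosen values
together with the new value is componentwise at most `{w(1),…,w(d)}`, and `vp d = v (idx d)`. -/
def GreedyRel {n : ℕ} (w v vp : Equiv.Perm (Fin n)) : Prop :=
  ∃ idx : Fin n → Fin n,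
    (∀ d : Fin n, vp d = v (idx d)) ∧
    ∀ d : Fin n,
      IsLeast {i : Fin n |
        (∀ e : Fin n, e < d → idx e ≠ i) ∧
        domLE (insert (v i)
            ((Finset.univ.filter fun e : Fin n => e < d).image fun e => v (idx e)))
          (initSeg w ((d : ℕ) + 1))}
        (idx d)

/-- Right weak order: `rightWeakLE u v` iff `v = u·s_{i₁}⋯s_{i_k}` with
`ℓ(u·s_{i₁}⋯s_{i_j}) = ℓ(u) + j` for all `0 ≤ j ≤ k`. -/
def rightWeakLE {n : ℕ} (u v : Equiv.Perm (Fin n)) : Prop :=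
  ∃ L : List (Equiv.Perm (Fin n)),
    (∀ s ∈ L, ∃ (i : Fin n) (h : (i : ℕ) + 1 < n), s = Equiv.swap i ⟨(i : ℕ) + 1, h⟩) ∧
    v = u * L.prod ∧
    ∀ k ≤ L.length, invCount (u * (L.take k).prod) = invCount u + k

/-- `Ref(w) = {(w(i),w(j)) : i < j, ℓ(w) − ℓ(t_{w(i),w(j)}·w) = 1}`. -/
def RefSet {n : ℕ} (w : Equiv.Perm (Fin n)) : Set (Fin n × Fin n) :=
  {p | ∃ i j : Fin n, i < j ∧ p = (w i, w j) ∧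
    invCount (Equiv.swap (w i) (w j) * w) + 1 = invCount w}

/-- The (undirected) graph `Γ_w` on `Fin n` whose edges are the pairs in `Ref(w)`. -/
def refGraph {n : ℕ} (w : Equiv.Perm (Fin n)) : SimpleGraph (Fin n) :=
  SimpleGraph.fromRel fun a b => (a, b) ∈ RefSet w

/-- The vertices of `Γ_w`: the integers occurring in pairs of `Ref(w)`. -/
def refVerts {n : ℕ} (w : Equiv.Perm (Fin n)) : Set (Fin n) :=
  {a | ∃ b, (a, b) ∈ RefSet w ∨ (b, a) ∈ RefSet w}

/-- The cone `C(v) = {x ∈ ℝⁿ : x_{v(1)} ≤ x_{v(2)} ≤ ⋯ ≤ x_{v(n)}}`. -/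
def coneC {n : ℕ} (v : Equiv.Perm (Fin n)) : Set (Fin n → ℝ) :=
  {x | ∀ i j : Fin n, i ≤ j → x (v i) ≤ x (v j)}

/-- `Ẽ_w(u) = {(u(i),u(j)) : i < j, t_{u(i),u(j)}·u ≤ w, |ℓ(u) − ℓ(t_{u(i),u(j)}·u)| = 1}`. -/
def Etil {n : ℕ} (w u : Equiv.Perm (Fin n)) : Set (Fin n × Fin n) :=
  {p | ∃ i j : Fin n, i < j ∧ p = (u i, u j) ∧
    bruhatLE (Equiv.swap (u i) (u j) * u) w ∧
    (invCount (Equiv.swap (u i) (u j) * u) + 1 = invCount u ∨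
      invCount u + 1 = invCount (Equiv.swap (u i) (u j) * u))}

/-- An element `p = (a,b)` of `Ẽ_w(u)` is decomposable if it is a sum (under
`(a,b)+(b,c) = (a,c)`) of two or more other elements of `Ẽ_w(u)`. -/
def Decomposable {n : ℕ} (w u : Equiv.Perm (Fin n)) (p : Fin n × Fin n) : Prop :=
  ∃ (m : ℕ) (c : ℕ → Fin n), 2 ≤ m ∧ c 0 = p.1 ∧ c m = p.2 ∧
    ∀ i < m, (c i, c (i + 1)) ∈ Etil w u ∧ (c i, c (i + 1)) ≠ p

/-- `E_w(u)`: the indecomposable elements of `Ẽ_w(u)`. -/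
def Ew {n : ℕ} (w u : Equiv.Perm (Fin n)) : Set (Fin n × Fin n) :=
  {p | p ∈ Etil w u ∧ ¬ Decomposable w u p}

/-- The longest element `w₀ = n(n−1)⋯21` of `Sₙ`. -/
def w0 {n : ℕ} : Equiv.Perm (Fin n) :=
  Function.Involutive.toPerm Fin.rev Fin.rev_rev


section AuxKey
open Finset
noncomputable def Icnt {n : ℕ} (w : Equiv.Perm (Fin n)) : ℤ :=
  ∑ p : Fin n × Fin n, if p.1 < p.2 ∧ w p.2 < w p.1 then (1:ℤ) else 0

lemma invCount_eq_I {n : ℕ} (w : Equiv.Perm (Fin n)) : (invCount w : ℤ) = Icnt w := by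
  classical
  rw [invCount, Icnt, Finset.card_filter]
  push_cast
  rfl

lemma I_mul_swap {n : ℕ} (w : Equiv.Perm (Fin n)) (i j : Fin n) :
    Icnt (w * Equiv.swap i j) =
      ∑ p : Fin n × Fin n,
        if Equiv.swap i j p.1 < Equiv.swap i j p.2 ∧ w p.2 < w p.1 then (1:ℤ) else 0 := by
  rw [Icnt]
  rw [← Equiv.sum_comp (Equiv.prodCongr (Equiv.swap i j) (Equiv.swap i j))
    (fun p : Fin n × Fin n =>
      if Equiv.swap i j p.1 < Equiv.swap i j p.2 ∧ w p.2 < w p.1 then (1:ℤ) else 0)]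
  refine Finset.sum_congr rfl fun p _ => ?_
  simp [Equiv.Perm.mul_apply, Equiv.swap_apply_self]
  congr 1

lemma flip_mem {n : ℕ} {i j : Fin n} (hij : i < j) (p q : Fin n)
    (h : ¬(p < q ↔ Equiv.swap i j p < Equiv.swap i j q)) :
    (p, q) ∈ (({i} ×ˢ Ioc i j) ∪ (Ioo i j ×ˢ {j}) ∪ (Ioc i j ×ˢ {i}) ∪ ({j} ×ˢ Ioo i j)
      : Finset (Fin n × Fin n)) := by
  have h' : (p < q ∧ ¬ Equiv.swap i j p < Equiv.swap i j q) ∨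
      (¬ p < q ∧ Equiv.swap i j p < Equiv.swap i j q) := by tauto
  clear h
  simp only [Equiv.swap_apply_def] at h'
  simp only [Finset.mem_union, Finset.mem_product, Finset.mem_singleton, Finset.mem_Ioc,
    Finset.mem_Ioo]
  split_ifs at h' <;>
    (simp only [Fin.lt_iff_val_lt_val, Fin.le_iff_val_le_val, Fin.ext_iff] at *; omega)

lemma I_diff {n : ℕ} (w : Equiv.Perm (Fin n)) {i j : Fin n} (hij : i < j) :
    Icnt w - Icnt (w * Equiv.swap i j) =
      ((if w j < w i then (1:ℤ) else 0) - (if w i < w j then 1 else 0))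
      + ∑ q ∈ Ioo i j,
          ((if w q < w i then (1:ℤ) else 0) + (if w j < w q then 1 else 0)
            - (if w i < w q then 1 else 0) - (if w q < w j then 1 else 0)) := by
  classical
  set σ := Equiv.swap i j with hσ
  have hσii : σ i = j := Equiv.swap_apply_left i j
  have hσjj : σ j = i := Equiv.swap_apply_right i j
  have hσq : ∀ q : Fin n, q ∈ Ioo i j → σ q = q := fun q hq => by
    rw [Finset.mem_Ioo] at hq
    exact Equiv.swap_apply_of_ne_of_ne (ne_of_gt hq.1) (ne_of_lt hq.2)
  -- difference as a single sum
  have hD : Icnt w - Icnt (w * σ) =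
      ∑ p : Fin n × Fin n,
        ((if p.1 < p.2 ∧ w p.2 < w p.1 then (1:ℤ) else 0)
          - (if σ p.1 < σ p.2 ∧ w p.2 < w p.1 then 1 else 0)) := by
    rw [Icnt, I_mul_swap, ← Finset.sum_sub_distrib]
  rw [hD]
  set F : Finset (Fin n × Fin n) :=
    ({i} ×ˢ Ioc i j) ∪ (Ioo i j ×ˢ {j}) ∪ (Ioc i j ×ˢ {i}) ∪ ({j} ×ˢ Ioo i j) with hF
  have hsupp : ∀ p : Fin n × Fin n, p ∉ F →
      ((if p.1 < p.2 ∧ w p.2 < w p.1 then (1:ℤ) else 0)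
        - (if σ p.1 < σ p.2 ∧ w p.2 < w p.1 then 1 else 0)) = 0 := by
    rintro ⟨p, q⟩ hp
    have : (p < q ↔ σ p < σ q) := by
      by_contra hc
      exact hp (flip_mem hij p q hc)
    simp only [this]
    ring
  rw [← Finset.sum_subset (Finset.subset_univ F) (fun p _ hp => hsupp p hp)]
  have d1 : Disjoint (({i} ×ˢ Ioc i j : Finset (Fin n × Fin n))) (Ioo i j ×ˢ {j}) := by
    simp only [Finset.disjoint_left, Finset.mem_product, Finset.mem_singleton, Finset.mem_Ioc,
      Finset.mem_Ioo]
    rintro ⟨p, q⟩ h1 h2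
    simp only [Fin.lt_iff_val_lt_val, Fin.le_iff_val_le_val, Fin.ext_iff] at *
    omega
  have d2 : Disjoint (({i} ×ˢ Ioc i j ∪ Ioo i j ×ˢ {j} : Finset (Fin n × Fin n)))
      (Ioc i j ×ˢ {i}) := by
    simp only [Finset.disjoint_left, Finset.mem_union, Finset.mem_product, Finset.mem_singleton,
      Finset.mem_Ioc, Finset.mem_Ioo]
    rintro ⟨p, q⟩ h1 h2
    simp only [Fin.lt_iff_val_lt_val, Fin.le_iff_val_le_val, Fin.ext_iff] at *
    omega
  have d3 : Disjoint (({i} ×ˢ Ioc i j ∪ Ioo i j ×ˢ {j} ∪ Ioc i j ×ˢ {i}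
      : Finset (Fin n × Fin n))) ({j} ×ˢ Ioo i j) := by
    simp only [Finset.disjoint_left, Finset.mem_union, Finset.mem_product, Finset.mem_singleton,
      Finset.mem_Ioc, Finset.mem_Ioo]
    rintro ⟨p, q⟩ h1 h2
    simp only [Fin.lt_iff_val_lt_val, Fin.le_iff_val_le_val, Fin.ext_iff] at *
    omega
  rw [hF, Finset.sum_union d3, Finset.sum_union d2, Finset.sum_union d1]
  have hjI : j ∉ Ioo i j := by simp
  have e1 : ∑ p ∈ ({i} ×ˢ Ioc i j : Finset (Fin n × Fin n)),
      ((if p.1 < p.2 ∧ w p.2 < w p.1 then (1:ℤ) else 0)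
        - (if σ p.1 < σ p.2 ∧ w p.2 < w p.1 then 1 else 0)) =
      (if w j < w i then (1:ℤ) else 0) + ∑ t ∈ Ioo i j, (if w t < w i then (1:ℤ) else 0) := by
    rw [Finset.sum_product, Finset.sum_singleton]
    rw [← Finset.Ioo_insert_right hij, Finset.sum_insert hjI]
    congr 1
    · have h2 : ¬ σ i < σ j := by rw [hσii, hσjj]; exact fun hc => absurd hc (lt_asymm hij)
      simp [hij, h2]
    · refine Finset.sum_congr rfl fun t ht => ?_
      have ht' := Finset.mem_Ioo.mp ht
      have h2 : ¬ σ i < σ t := by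
        rw [hσii, hσq t ht]
        exact fun hc => absurd hc (lt_asymm ht'.2)
      simp [ht'.1, h2]
  have e2 : ∑ p ∈ (Ioo i j ×ˢ {j} : Finset (Fin n × Fin n)),
      ((if p.1 < p.2 ∧ w p.2 < w p.1 then (1:ℤ) else 0)
        - (if σ p.1 < σ p.2 ∧ w p.2 < w p.1 then 1 else 0)) =
      ∑ s ∈ Ioo i j, (if w j < w s then (1:ℤ) else 0) := by
    rw [Finset.sum_product]
    refine Finset.sum_congr rfl fun s hs => ?_
    rw [Finset.sum_singleton]
    have hs' := Finset.mem_Ioo.mp hs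
    have h2 : ¬ σ s < σ j := by
      rw [hσjj, hσq s hs]
      exact fun hc => absurd hc (lt_asymm hs'.1)
    simp [hs'.2, h2]
  have e3 : ∑ p ∈ (Ioc i j ×ˢ {i} : Finset (Fin n × Fin n)),
      ((if p.1 < p.2 ∧ w p.2 < w p.1 then (1:ℤ) else 0)
        - (if σ p.1 < σ p.2 ∧ w p.2 < w p.1 then 1 else 0)) =
      -((if w i < w j then (1:ℤ) else 0) + ∑ s ∈ Ioo i j, (if w i < w s then (1:ℤ) else 0)) := by
    rw [Finset.sum_product]
    rw [← Finset.Ioo_insert_right hij, Finset.sum_insert hjI, neg_add, ← Finset.sum_neg_distrib]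
    congr 1
    · rw [Finset.sum_singleton]
      have h1 : ¬ j < i := lt_asymm hij
      have h2 : σ j < σ i := by rw [hσii, hσjj]; exact hij
      simp [h1, h2]
    · refine Finset.sum_congr rfl fun s hs => ?_
      rw [Finset.sum_singleton]
      have hs' := Finset.mem_Ioo.mp hs
      have h1 : ¬ s < i := lt_asymm hs'.1
      have h2 : σ s < σ i := by rw [hσii, hσq s hs]; exact hs'.2
      simp [h1, h2]
  have e4 : ∑ p ∈ ({j} ×ˢ Ioo i j : Finset (Fin n × Fin n)),
      ((if p.1 < p.2 ∧ w p.2 < w p.1 then (1:ℤ) else 0)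
        - (if σ p.1 < σ p.2 ∧ w p.2 < w p.1 then 1 else 0)) =
      -∑ t ∈ Ioo i j, (if w t < w j then (1:ℤ) else 0) := by
    rw [Finset.sum_product, Finset.sum_singleton, ← Finset.sum_neg_distrib]
    refine Finset.sum_congr rfl fun t ht => ?_
    have ht' := Finset.mem_Ioo.mp ht
    have h1 : ¬ j < t := lt_asymm ht'.2
    have h2 : σ j < σ t := by rw [hσjj, hσq t ht]; exact ht'.1
    simp [h1, h2]
  rw [e1, e2, e3, e4]
  have expand : ∑ q ∈ Ioo i j,
      ((if w q < w i then (1:ℤ) else 0) + (if w j < w q then 1 else 0)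
        - (if w i < w q then 1 else 0) - (if w q < w j then 1 else 0)) =
      (∑ q ∈ Ioo i j, (if w q < w i then (1:ℤ) else 0))
      + (∑ q ∈ Ioo i j, (if w j < w q then (1:ℤ) else 0))
      - (∑ q ∈ Ioo i j, (if w i < w q then (1:ℤ) else 0))
      - (∑ q ∈ Ioo i j, (if w q < w j then (1:ℤ) else 0)) := by
    rw [Finset.sum_sub_distrib, Finset.sum_sub_distrib, Finset.sum_add_distrib]
  rw [expand]
  ring

lemma mul_swap_eq {n : ℕ} (w : Equiv.Perm (Fin n)) (i j : Fin n) :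
    Equiv.swap (w i) (w j) * w = w * Equiv.swap i j := by
  rw [Equiv.swap_apply_apply]; group

lemma refset_struct {n : ℕ} (w : Equiv.Perm (Fin n)) {i j : Fin n} (hij : i < j)
    (h : invCount (Equiv.swap (w i) (w j) * w) + 1 = invCount w) :
    w j < w i ∧ ∀ k : Fin n, i < k → k < j → ¬ (w j < w k ∧ w k < w i) := by
  rw [mul_swap_eq] at h
  have hE : Icnt w - Icnt (w * Equiv.swap i j) = 1 := by
    have := congrArg (fun m : ℕ => (m : ℤ)) h
    push_cast at this
    rw [invCount_eq_I, invCount_eq_I] at this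
    linarith
  rw [I_diff w hij] at hE
  have hne1 : ∀ q ∈ Ioo i j, w q ≠ w i := by
    intro q hq hc
    have := w.injective hc
    rw [this] at hq
    simp at hq
  have hne2 : ∀ q ∈ Ioo i j, w q ≠ w j := by
    intro q hq hc
    have := w.injective hc
    rw [this] at hq
    simp at hq
  have hwij : w i ≠ w j := fun hc => absurd (w.injective hc) (ne_of_lt hij)
  rcases lt_trichotomy (w i) (w j) with hlt | heq | hgt
  · -- impossible case
    exfalso
    have h1 : ∀ q ∈ Ioo i j,
        ((if w q < w i then (1:ℤ) else 0) + (if w j < w q then 1 else 0)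
          - (if w i < w q then 1 else 0) - (if w q < w j then 1 else 0)) ≤ 0 := by
      intro q hq
      rcases lt_trichotomy (w q) (w i) with h1 | h1 | h1
      · simp [h1, lt_asymm h1, lt_asymm (h1.trans hlt), h1.trans hlt]
      · exact absurd h1 (hne1 q hq)
      · rcases lt_trichotomy (w q) (w j) with h2 | h2 | h2
        · simp [lt_asymm h1, h1, h2, lt_asymm h2]
        · exact absurd h2 (hne2 q hq)
        · simp [lt_asymm h1, h1, h2, lt_asymm h2]
    have hsum : ∑ q ∈ Ioo i j,
        ((if w q < w i then (1:ℤ) else 0) + (if w j < w q then 1 else 0)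
          - (if w i < w q then 1 else 0) - (if w q < w j then 1 else 0)) ≤ 0 :=
      Finset.sum_nonpos h1
    rw [if_neg (lt_asymm hlt), if_pos hlt] at hE
    linarith
  · exact absurd heq hwij
  · refine ⟨hgt, ?_⟩
    rw [if_pos hgt, if_neg (lt_asymm hgt)] at hE
    have h0 : ∀ q ∈ Ioo i j,
        0 ≤ ((if w q < w i then (1:ℤ) else 0) + (if w j < w q then 1 else 0)
          - (if w i < w q then 1 else 0) - (if w q < w j then 1 else 0)) := by
      intro q hq
      rcases lt_trichotomy (w q) (w j) with h1 | h1 | h1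
      · simp [h1, h1.trans hgt, lt_asymm h1, lt_asymm (h1.trans hgt)]
      · exact absurd h1 (hne2 q hq)
      · rcases lt_trichotomy (w q) (w i) with h2 | h2 | h2
        · simp [h1, h2, lt_asymm h1, lt_asymm h2]
        · exact absurd h2 (hne1 q hq)
        · simp [h1, h2, lt_asymm h1, lt_asymm h2]
    have hzero : ∀ q ∈ Ioo i j,
        ((if w q < w i then (1:ℤ) else 0) + (if w j < w q then 1 else 0)
          - (if w i < w q then 1 else 0) - (if w q < w j then 1 else 0)) = 0 := by
      have hsum : ∑ q ∈ Ioo i j,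
          ((if w q < w i then (1:ℤ) else 0) + (if w j < w q then 1 else 0)
            - (if w i < w q then 1 else 0) - (if w q < w j then 1 else 0)) = 0 := by
        linarith
      exact (Finset.sum_eq_zero_iff_of_nonneg h0).mp hsum
    intro k hik hkj ⟨hbk, hka⟩
    have := hzero k (Finset.mem_Ioo.mpr ⟨hik, hkj⟩)
    rw [if_pos hka, if_pos hbk, if_neg (lt_asymm hka), if_neg (lt_asymm hbk)] at this
    norm_num at this


lemma refset_facts {n : ℕ} (w : Equiv.Perm (Fin n)) {x y : Fin n}
    (h : (x, y) ∈ RefSet w) : y < x ∧ w⁻¹ x < w⁻¹ y := by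
  obtain ⟨i, j, hij, hpair, hinv⟩ := h
  obtain ⟨hx, hy⟩ := Prod.mk.injEq .. ▸ hpair
  subst hx; subst hy
  have hs := refset_struct w hij hinv
  refine ⟨hs.1, ?_⟩
  rw [Equiv.Perm.inv_def, Equiv.symm_apply_apply, Equiv.symm_apply_apply]
  exact hij

end AuxKey

/-- For `(a,b) ∈ Ref(w)`, the vector `e_b − e_a` cannot be written as a
positive combination `Σ c_i (e_{b_i} − e_{a_i})` of pairwise distinct elements of `Ref(w)`
all different from `(a,b)`; i.e. `e_b − e_a` spans an extreme ray of the cone `D_w`. -/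
theorem edge_vector_extreme {n : ℕ} (w : Equiv.Perm (Fin n)) (a b : Fin n)
    (hab : (a, b) ∈ RefSet w) (k : ℕ) (hk : 1 ≤ k)
    (c : Fin k → ℝ) (p : Fin k → Fin n × Fin n)
    (hc : ∀ i, 0 < c i) (hp : ∀ i, p i ∈ RefSet w) (hne : ∀ i, p i ≠ (a, b))
    (hinj : Function.Injective p) :
    (Pi.single b 1 - Pi.single a 1 : Fin n → ℝ) ≠
      ∑ i, c i • (Pi.single (p i).2 1 - Pi.single (p i).1 1 : Fin n → ℝ) := by
  classical
  intro hEq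
  -- structure of (a,b)
  obtain ⟨i₀, j₀, hij₀, hpair₀, hinv₀⟩ := hab
  obtain ⟨hxa, hxb⟩ := Prod.mk.injEq .. ▸ hpair₀
  have hstruct₀ := refset_struct w hij₀ hinv₀
  have hba : b < a := by rw [hxa, hxb]; exact hstruct₀.1
  -- the step relation
  set R : Fin n → Fin n → Prop := fun z y => (z, y) ∈ RefSet w ∧ (z, y) ≠ (a, b) with hR
  have hRfacts : ∀ z y, R z y → y < z ∧ w⁻¹ z < w⁻¹ y := fun z y hzy => refset_facts w hzy.1
  -- reachability facts
  have hreach : ∀ z, Relation.ReflTransGen R z b → b ≤ z ∧ w⁻¹ z ≤ w⁻¹ b := by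
    intro z hz
    induction hz using Relation.ReflTransGen.head_induction_on with
    | refl => exact ⟨le_refl _, le_refl _⟩
    | head hstep _ ih =>
        obtain ⟨h1, h2⟩ := hRfacts _ _ hstep
        exact ⟨ih.1.trans h1.le, (h2.trans_le ih.2).le⟩
  have haU : ¬ Relation.ReflTransGen R a b := by
    intro hr
    rcases Relation.ReflTransGen.cases_head hr with heq | ⟨x₁, hstep, hr'⟩
    · exact absurd heq.symm (ne_of_lt hba)
    · by_cases hx1b : x₁ = b
      · subst hx1b
        exact hstep.2 rfl
      · obtain ⟨hlt, hpos⟩ := hRfacts _ _ hstep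
        obtain ⟨hge, hple⟩ := hreach _ hr'
        have hbx : b < x₁ := lt_of_le_of_ne hge (Ne.symm hx1b)
        have hppos : w⁻¹ x₁ < w⁻¹ b :=
          lt_of_le_of_ne hple (fun hc => hx1b (w⁻¹.injective hc))
        have hk1 : i₀ < w⁻¹ x₁ := by
          have : w⁻¹ a = i₀ := by rw [hxa, Equiv.Perm.inv_def, Equiv.symm_apply_apply]
          rw [← this]; exact hpos
        have hk2 : w⁻¹ x₁ < j₀ := by
          have : w⁻¹ b = j₀ := by rw [hxb, Equiv.Perm.inv_def, Equiv.symm_apply_apply]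
          rw [← this]; exact hppos
        refine hstruct₀.2 (w⁻¹ x₁) hk1 hk2 ⟨?_, ?_⟩
        · rw [← hxb, Equiv.Perm.inv_def, Equiv.apply_symm_apply]
          exact hbx
        · rw [← hxa, Equiv.Perm.inv_def, Equiv.apply_symm_apply]
          exact hlt
  -- the cut
  set U : Finset (Fin n) := Finset.univ.filter (fun z => Relation.ReflTransGen R z b) with hU
  have hbU : b ∈ U := by
    rw [hU, Finset.mem_filter]
    exact ⟨Finset.mem_univ _, Relation.ReflTransGen.refl⟩
  have haNU : a ∉ U := by
    rw [hU, Finset.mem_filter]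
    exact fun hc => haU hc.2
  have hclosed : ∀ i : Fin k, (p i).2 ∈ U → (p i).1 ∈ U := by
    intro i hq
    rw [hU, Finset.mem_filter] at hq ⊢
    refine ⟨Finset.mem_univ _, Relation.ReflTransGen.head ⟨?_, ?_⟩ hq.2⟩
    · exact hp i
    · exact hne i
  -- sum the equality over U
  have hsum : ∑ z ∈ U, ((Pi.single b 1 - Pi.single a 1 : Fin n → ℝ)) z =
      ∑ z ∈ U, (∑ i, c i • (Pi.single (p i).2 1 - Pi.single (p i).1 1 : Fin n → ℝ)) z := by
    rw [hEq]
  have hL : ∑ z ∈ U, ((Pi.single b 1 - Pi.single a 1 : Fin n → ℝ)) z = 1 := by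
    simp only [Pi.sub_apply, Pi.single_apply, Finset.sum_sub_distrib]
    rw [Finset.sum_ite_eq' U b (fun _ => (1:ℝ)), Finset.sum_ite_eq' U a (fun _ => (1:ℝ))]
    rw [if_pos hbU, if_neg haNU]
    ring
  have hRterm : ∀ i : Fin k,
      c i * ((if (p i).2 ∈ U then (1:ℝ) else 0) - (if (p i).1 ∈ U then 1 else 0)) ≤ 0 := by
    intro i
    by_cases hq : (p i).2 ∈ U
    · rw [if_pos hq, if_pos (hclosed i hq)]
      simp
    · rw [if_neg hq]
      have : (0:ℝ) - (if (p i).1 ∈ U then (1:ℝ) else 0) ≤ 0 := by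
        split_ifs <;> norm_num
      exact mul_nonpos_of_nonneg_of_nonpos (hc i).le this
  have hRsum : ∑ z ∈ U, (∑ i, c i • (Pi.single (p i).2 1 - Pi.single (p i).1 1 : Fin n → ℝ)) z
      ≤ 0 := by
    simp only [Finset.sum_apply, Pi.smul_apply, Pi.sub_apply, Pi.single_apply, smul_eq_mul]
    rw [Finset.sum_comm]
    refine Finset.sum_nonpos fun i _ => ?_
    have : ∑ z ∈ U, c i * ((if z = (p i).2 then (1:ℝ) else 0) - (if z = (p i).1 then 1 else 0))
        = c i * ((if (p i).2 ∈ U then (1:ℝ) else 0) - (if (p i).1 ∈ U then 1 else 0)) := by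
      rw [← Finset.mul_sum, Finset.sum_sub_distrib,
        Finset.sum_ite_eq' U (p i).2 (fun _ => (1:ℝ)),
        Finset.sum_ite_eq' U (p i).1 (fun _ => (1:ℝ))]
    rw [this]
    exact hRterm i
  rw [hL] at hsum
  rw [← hsum] at hRsum
  linarith

end SchubertToric
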